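/- Assume there are random variables C₁ ∈ L^{p₁}, C₂ ∈ L^{p₂}, C₄ ∈ L^{p₄} with p₁, p₂, p₄ > 0, real numbers β > 1 and r > 0 with β − r > 1 and pᵢ·r/3 > 1 for i ∈ {1,2,4}, a full-measure set Ω′ ⊆ Ω and measurable families (h_{ω,ε}) such that conditions (C2), (C3) and (C5) hold. Then there is a full-measure set Ω″ ⊆ Ω such that for every ω ∈ Ω″ and every ε ∈ I, the series Σ_{n=0}^{∞} L^{n}_{σ^{−n}ω,ε} ( L_{σ^{−(n+1)}ω,ε} − L_{σ^{−(n+1)}ω,0} ) h_{σ^{−(n+1)}ω,0} converges absolutely in 𝓑_w and its sum equals h_{ω,ε} − h_{ω,0}. -/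

import Mathlib

open MeasureTheory

noncomputable section

/-- `C ∈ L^p(Ω,𝓕,ℙ)` for a nonnegative random variable `C`. -/
def MemLpRV {Ω : Type*} [MeasurableSpace Ω] (ℙ : Measure Ω) (p : ℝ) (C : Ω → ℝ) : Prop :=
  Measurable C ∧ (∀ ω, 0 ≤ C ω) ∧ Integrable (fun ω => C ω ^ p) ℙ

/-- The cocycle `L^n_ω = L_{σ^{n-1}ω} ∘ ⋯ ∘ L_ω` (with `L⁰ = Id`). -/
def iterOp {Ω E : Type*} [NormedAddCommGroup E] [NormedSpace ℝ E]
    (σ : Ω → Ω) (L : Ω → E →L[ℝ] E) : ℕ → Ω → E →L[ℝ] E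
  | 0, _ => ContinuousLinearMap.id ℝ E
  | n + 1, ω => (iterOp σ L n (σ ω)).comp (L ω)

set_option maxHeartbeats 1000000 in
/-- Borel–Cantelli-type lemma: along the orbit of a measure preserving map,
an `L^p` random variable grows slower than `n ^ a` provided `1 < a * p`. -/
theorem bc_aux {Ω : Type*} [MeasurableSpace Ω] (ℙ : Measure Ω) [IsProbabilityMeasure ℙ]
    (τ : Ω → Ω) (hτ : MeasurePreserving τ ℙ ℙ) (C : Ω → ℝ) (p a : ℝ)
    (hp : 0 < p) (ha : 0 < a) (hpa : 1 < a * p) (hC : MemLpRV ℙ p C) :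
    ∀ᵐ ω ∂ℙ, ∀ᶠ n : ℕ in Filter.atTop, C (τ^[n] ω) ≤ (n : ℝ) ^ a := by
  obtain ⟨hCm, hCnn, hCint⟩ := hC
  set f : Ω → ENNReal := fun x => ENNReal.ofReal (C x ^ p) with hf
  have hfm : Measurable f := by measurability
  have hB : ∫⁻ x, f x ∂ℙ < ⊤ := hCint.lintegral_lt_top
  set s : ℕ → Set Ω := fun n => τ^[n] ⁻¹' {x | (n : ℝ) ^ a < C x} with hs
  have hmeaset : ∀ n : ℕ, MeasurableSet {x | ((n : ℝ)) ^ a < C x} :=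
    fun n => measurableSet_lt measurable_const hCm
  have hmeq : ∀ n, ℙ (s n) = ℙ {x | (n : ℝ) ^ a < C x} := fun n =>
    (hτ.iterate n).measure_preimage (hmeaset n).nullMeasurableSet
  have key : ∀ n : ℕ, 1 ≤ n →
      ℙ (s n) ≤ (∫⁻ x, f x ∂ℙ) * ENNReal.ofReal (((n : ℝ) ^ (a * p))⁻¹) := by
    intro n hn
    have hn0 : (0:ℝ) < (n:ℝ) := by exact_mod_cast hn
    have hpos : (0:ℝ) < (n:ℝ) ^ (a * p) := Real.rpow_pos_of_pos hn0 _
    have hsub : {x | (n : ℝ) ^ a < C x} ⊆ {x | ENNReal.ofReal ((n:ℝ) ^ (a*p)) ≤ f x} := by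
      intro x hx
      have h1 : ((n:ℝ) ^ a) ^ p ≤ C x ^ p :=
        Real.rpow_le_rpow (Real.rpow_nonneg hn0.le _) (le_of_lt hx) hp.le
      have h2 : (n:ℝ) ^ (a * p) = ((n:ℝ) ^ a) ^ p := Real.rpow_mul hn0.le _ _
      exact ENNReal.ofReal_le_ofReal (h2 ▸ h1)
    calc ℙ (s n) = ℙ {x | (n : ℝ) ^ a < C x} := hmeq n
      _ ≤ ℙ {x | ENNReal.ofReal ((n:ℝ) ^ (a*p)) ≤ f x} := measure_mono hsub
      _ ≤ (∫⁻ x, f x ∂ℙ) / ENNReal.ofReal ((n:ℝ) ^ (a*p)) :=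
          meas_ge_le_lintegral_div hfm.aemeasurable
            (by simp [ENNReal.ofReal_eq_zero, not_le, hpos]) ENNReal.ofReal_ne_top
      _ = (∫⁻ x, f x ∂ℙ) * ENNReal.ofReal (((n : ℝ) ^ (a * p))⁻¹) := by
          rw [ENNReal.ofReal_inv_of_pos hpos, div_eq_mul_inv]
  have hsum : (∑' n, ℙ (s n)) ≠ ⊤ := by
    have h0 : (∑' n, ℙ (s n)) = ℙ (s 0) + ∑' n, ℙ (s (n + 1)) :=
      tsum_eq_zero_add' ENNReal.summable
    have hsummable : Summable (fun n : ℕ => (((n + 1 : ℕ) : ℝ) ^ (a * p))⁻¹) := by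
      have h := Real.summable_nat_rpow_inv.mpr hpa
      exact (summable_nat_add_iff 1).mpr h
    have htail : (∑' n, ℙ (s (n + 1))) ≤
        (∫⁻ x, f x ∂ℙ) * ∑' n : ℕ, ENNReal.ofReal ((((n + 1 : ℕ) : ℝ) ^ (a * p))⁻¹) := by
      rw [← ENNReal.tsum_mul_left]
      exact ENNReal.tsum_le_tsum fun n => key (n + 1) (Nat.succ_le_succ n.zero_le)
    have hfin : (∑' n : ℕ, ENNReal.ofReal ((((n + 1 : ℕ) : ℝ) ^ (a * p))⁻¹)) ≠ ⊤ := by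
      rw [← ENNReal.ofReal_tsum_of_nonneg (fun n => by positivity) hsummable]
      exact ENNReal.ofReal_ne_top
    rw [h0]
    exact ENNReal.add_ne_top.mpr ⟨(measure_lt_top _ _).ne,
      (htail.trans_lt (ENNReal.mul_lt_top hB hfin.lt_top)).ne⟩
  filter_upwards [ae_eventually_notMem hsum] with ω hω
  filter_upwards [hω] with n hn
  exact not_lt.mp hn

set_option maxHeartbeats 1000000 in
theorem stmt_15
    {Ω : Type*} [MeasurableSpace Ω] (ℙ : Measure Ω) [IsProbabilityMeasure ℙ]
    (σ σinv : Ω → Ω)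
    (hσ : MeasurePreserving σ ℙ ℙ) (hσinv : Measurable σinv)
    (hinv₁ : Function.LeftInverse σinv σ) (hinv₂ : Function.RightInverse σinv σ)
    (hErg : Ergodic σ ℙ)
    {Bw Bs Bss : Type*}
    [NormedAddCommGroup Bw] [NormedSpace ℝ Bw] [CompleteSpace Bw]
    [NormedAddCommGroup Bs] [NormedSpace ℝ Bs]
    [NormedAddCommGroup Bss] [NormedSpace ℝ Bss]
    [MeasurableSpace Bss] [BorelSpace Bss]
    (ιs : Bs →L[ℝ] Bw) (ιss : Bss →L[ℝ] Bs)
    (hιs : ∀ x : Bs, ‖ιs x‖ ≤ ‖x‖) (hιss : ∀ x : Bss, ‖ιss x‖ ≤ ‖x‖)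
    (I : Set ℝ) (hIopen : IsOpen I) (hIsub : I ⊆ Set.Ioo (-1) 1) (hI0 : (0 : ℝ) ∈ I)
    (Lw : ℝ → Ω → Bw →L[ℝ] Bw) (Ls : ℝ → Ω → Bs →L[ℝ] Bs) (Lss : ℝ → Ω → Bss →L[ℝ] Bss)
    (hcomp_s : ∀ ε ω x, ιs (Ls ε ω x) = Lw ε ω (ιs x))
    (hcomp_ss : ∀ ε ω x, ιss (Lss ε ω x) = Ls ε ω (ιss x))
    (ψ : Bw →L[ℝ] ℝ) (hψne : ψ ≠ 0)
    (hψinv : ∀ ε ∈ I, ∀ ω : Ω, ∀ x : Bw, ψ (Lw ε ω x) = ψ x)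
    (p1 p2 p4 : ℝ) (hp1 : 0 < p1) (hp2 : 0 < p2) (hp4 : 0 < p4)
    (C1 C2 C4 : Ω → ℝ)
    (hC1 : MemLpRV ℙ p1 C1) (hC2 : MemLpRV ℙ p2 C2) (hC4 : MemLpRV ℙ p4 C4)
    (β r : ℝ) (hβ : 1 < β) (hr : 0 < r) (hβr : 1 < β - r)
    (hp1r : 1 < p1 * r / 3) (hp2r : 1 < p2 * r / 3) (hp4r : 1 < p4 * r / 3)
    (Ω' : Set Ω) (hΩ' : ℙ Ω'ᶜ = 0)
    (h : ℝ → Ω → Bss)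
    (hmeas : ∀ ε ∈ I, Measurable (h ε))
    -- (C2)
    (cond2 : ∀ n : ℕ, 1 ≤ n → ∀ ε ∈ I, ∀ ω ∈ Ω', ∀ x : Bs, ψ (ιs x) = 0 →
      ‖iterOp σ (Lw ε) n ω (ιs x)‖ ≤ C1 ω * (n : ℝ) ^ (-β) * ‖x‖)
    -- (C3)
    (cond3 : ∀ ε ∈ I, ∀ ω ∈ Ω', ∀ x : Bs,
      ‖Lw ε ω (ιs x) - Lw 0 ω (ιs x)‖ ≤ C2 ω * |ε| * ‖x‖)
    -- (C5)
    (cond5a : ∀ ε ∈ I, ∀ ω ∈ Ω', Lss ε ω (h ε ω) = h ε (σ ω))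
    (cond5b : ∀ ε ∈ I, ∀ ω ∈ Ω', ψ (ιs (ιss (h ε ω))) = 1)
    (cond5c : ∀ ε ∈ I, ∀ ω ∈ Ω', ‖h ε ω‖ ≤ C4 ω) :
    ∃ Ω'' : Set Ω, ℙ Ω''ᶜ = 0 ∧
      ∀ ω ∈ Ω'', ∀ ε ∈ I,
        Summable (fun n : ℕ =>
          ‖iterOp σ (Lw ε) n (σinv^[n] ω)
            (ιs (Ls ε (σinv^[n + 1] ω) (ιss (h 0 (σinv^[n + 1] ω))) -
              Ls 0 (σinv^[n + 1] ω) (ιss (h 0 (σinv^[n + 1] ω)))))‖) ∧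
        HasSum (fun n : ℕ =>
          iterOp σ (Lw ε) n (σinv^[n] ω)
            (ιs (Ls ε (σinv^[n + 1] ω) (ιss (h 0 (σinv^[n + 1] ω))) -
              Ls 0 (σinv^[n + 1] ω) (ιss (h 0 (σinv^[n + 1] ω))))))
          (ιs (ιss (h ε ω)) - ιs (ιss (h 0 ω))) := by
  classical
  have hσinvMP : MeasurePreserving σinv ℙ ℙ := by
    let e : Ω ≃ᵐ Ω :=
      { toEquiv := Equiv.mk σ σinv hinv₁ hinv₂
        measurable_toFun := hσ.measurable
        measurable_invFun := hσinv }
    exact MeasurePreserving.symm e hσ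
  have hr3 : (0:ℝ) < r / 3 := by linarith
  have hae1 : ∀ᵐ ω ∂ℙ, ∀ᶠ n : ℕ in Filter.atTop, C1 (σinv^[n] ω) ≤ (n : ℝ) ^ (r / 3) :=
    bc_aux ℙ σinv hσinvMP C1 p1 (r / 3) hp1 hr3
      (by rw [show r / 3 * p1 = p1 * r / 3 by ring]; exact hp1r) hC1
  have hae4 : ∀ᵐ ω ∂ℙ, ∀ᶠ n : ℕ in Filter.atTop, C4 (σinv^[n] ω) ≤ (n : ℝ) ^ (r / 3) :=
    bc_aux ℙ σinv hσinvMP C4 p4 (r / 3) hp4 hr3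
      (by rw [show r / 3 * p4 = p4 * r / 3 by ring]; exact hp4r) hC4
  have haeΩ' : ∀ᵐ ω ∂ℙ, ∀ n : ℕ, σinv^[n] ω ∈ Ω' := by
    rw [MeasureTheory.ae_all_iff]
    intro n
    have h0 : ℙ (σinv^[n] ⁻¹' Ω'ᶜ) = 0 :=
      (hσinvMP.iterate n).quasiMeasurePreserving.preimage_null hΩ'
    rw [MeasureTheory.ae_iff]
    exact h0
  have hae := haeΩ'.and (hae1.and hae4)
  refine ⟨{ω | (∀ n : ℕ, σinv^[n] ω ∈ Ω') ∧
      (∀ᶠ n : ℕ in Filter.atTop, C1 (σinv^[n] ω) ≤ (n : ℝ) ^ (r / 3)) ∧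
      (∀ᶠ n : ℕ in Filter.atTop, C4 (σinv^[n] ω) ≤ (n : ℝ) ^ (r / 3))}, ?_, ?_⟩
  · rw [Set.compl_setOf]
    exact MeasureTheory.ae_iff.mp hae
  rintro ω ⟨hΩω, hB1, hB4⟩ ε hε
  have hσw : ∀ n : ℕ, σ (σinv^[n + 1] ω) = σinv^[n] ω := by
    intro n
    rw [Function.iterate_succ_apply']
    exact hinv₂ _
  set b : ℕ → Bw := fun n => iterOp σ (Lw ε) n (σinv^[n] ω) (ιs (ιss (h 0 (σinv^[n] ω)))) with hbdef
  set T : ℕ → Bw := fun n =>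
    iterOp σ (Lw ε) n (σinv^[n] ω)
      (ιs (Ls ε (σinv^[n + 1] ω) (ιss (h 0 (σinv^[n + 1] ω))) -
        Ls 0 (σinv^[n + 1] ω) (ιss (h 0 (σinv^[n + 1] ω))))) with hTdef
  -- pushing invariant families forward along the cocycle
  have push : ∀ ε' ∈ I, ∀ n : ℕ,
      iterOp σ (Lw ε') n (σinv^[n] ω) (ιs (ιss (h ε' (σinv^[n] ω)))) = ιs (ιss (h ε' ω)) := by
    intro ε' hε' n
    induction n with
    | zero => simp [iterOp]
    | succ n ih =>
      have hstep : iterOp σ (Lw ε') (n + 1) (σinv^[n + 1] ω) =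
          (iterOp σ (Lw ε') n (σ (σinv^[n + 1] ω))).comp (Lw ε' (σinv^[n + 1] ω)) := rfl
      have harg : Lw ε' (σinv^[n + 1] ω) (ιs (ιss (h ε' (σinv^[n + 1] ω)))) =
          ιs (ιss (h ε' (σinv^[n] ω))) := by
        rw [← hcomp_s, ← hcomp_ss, cond5a ε' hε' _ (hΩω (n + 1)), hσw n]
      rw [hstep]
      simp only [ContinuousLinearMap.comp_apply]
      rw [hσw n, harg, ih]
  have hb_succ : ∀ n : ℕ, b (n + 1) =
      iterOp σ (Lw ε) n (σinv^[n] ω)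
        (Lw ε (σinv^[n + 1] ω) (ιs (ιss (h 0 (σinv^[n + 1] ω))))) := by
    intro n
    have hstep : iterOp σ (Lw ε) (n + 1) (σinv^[n + 1] ω) =
        (iterOp σ (Lw ε) n (σ (σinv^[n + 1] ω))).comp (Lw ε (σinv^[n + 1] ω)) := rfl
    rw [hbdef]
    simp only [hstep, ContinuousLinearMap.comp_apply, hσw n]
  have hTeq : ∀ n : ℕ, T n = b (n + 1) - b n := by
    intro n
    have hY : ιs (Ls 0 (σinv^[n + 1] ω) (ιss (h 0 (σinv^[n + 1] ω)))) =
        ιs (ιss (h 0 (σinv^[n] ω))) := by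
      rw [← hcomp_ss, cond5a 0 hI0 _ (hΩω (n + 1)), hσw n]
    rw [hTdef]
    simp only
    rw [map_sub, map_sub, hY, hcomp_s, ← hb_succ n]
  have hbound : ∀ n : ℕ, 1 ≤ n →
      ‖b n - ιs (ιss (h ε ω))‖ ≤ C1 (σinv^[n] ω) * (n : ℝ) ^ (-β) * (2 * C4 (σinv^[n] ω)) := by
    intro n hn
    have hrw : b n - ιs (ιss (h ε ω)) =
        iterOp σ (Lw ε) n (σinv^[n] ω) (ιs (ιss (h 0 (σinv^[n] ω)) - ιss (h ε (σinv^[n] ω)))) := by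
      rw [map_sub, map_sub, ← push ε hε n, hbdef]
    rw [hrw]
    have hψ0 : ψ (ιs (ιss (h 0 (σinv^[n] ω)) - ιss (h ε (σinv^[n] ω)))) = 0 := by
      rw [map_sub, map_sub, cond5b 0 hI0 _ (hΩω n), cond5b ε hε _ (hΩω n), sub_self]
    refine (cond2 n hn ε hε _ (hΩω n) _ hψ0).trans ?_
    have hx : ‖ιss (h 0 (σinv^[n] ω)) - ιss (h ε (σinv^[n] ω))‖ ≤ 2 * C4 (σinv^[n] ω) := by
      refine (norm_sub_le _ _).trans ?_
      have h1 := (hιss _).trans (cond5c 0 hI0 _ (hΩω n))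
      have h2 := (hιss _).trans (cond5c ε hε _ (hΩω n))
      linarith
    have hnn : 0 ≤ C1 (σinv^[n] ω) * (n:ℝ) ^ (-β) :=
      mul_nonneg (hC1.2.1 _) (Real.rpow_nonneg (Nat.cast_nonneg n) _)
    exact mul_le_mul_of_nonneg_left hx hnn
  have hc : r / 3 + -β + r / 3 < -1 := by linarith
  have hev : ∀ᶠ n : ℕ in Filter.atTop,
      ‖b n - ιs (ιss (h ε ω))‖ ≤ 2 * (n : ℝ) ^ (r / 3 + -β + r / 3) := by
    filter_upwards [hB1, hB4, Filter.eventually_ge_atTop 1] with n h1 h4 hn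
    have hn0 : (0:ℝ) < (n:ℝ) := by exact_mod_cast hn
    have e1 : C1 (σinv^[n] ω) * (n:ℝ) ^ (-β) * (2 * C4 (σinv^[n] ω)) ≤
        (n:ℝ) ^ (r / 3) * (n:ℝ) ^ (-β) * (2 * (n:ℝ) ^ (r / 3)) := by
      have hc1 : 0 ≤ C1 (σinv^[n] ω) := hC1.2.1 _
      have hc4 : 0 ≤ C4 (σinv^[n] ω) := hC4.2.1 _
      have hrp : (0:ℝ) ≤ (n:ℝ) ^ (-β) := Real.rpow_nonneg hn0.le _
      gcongr
    have e2 : (n:ℝ) ^ (r / 3) * (n:ℝ) ^ (-β) * (2 * (n:ℝ) ^ (r / 3)) =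
        2 * (n:ℝ) ^ (r / 3 + -β + r / 3) := by
      rw [Real.rpow_add hn0, Real.rpow_add hn0]
      ring
    exact (hbound n hn).trans (e1.trans_eq e2)
  have hc' : (0:ℝ) < -(r / 3 + -β + r / 3) := by linarith
  have htend0 : Filter.Tendsto (fun n : ℕ => 2 * (n:ℝ) ^ (r / 3 + -β + r / 3))
      Filter.atTop (nhds 0) := by
    have h1 : Filter.Tendsto (fun x : ℝ => x ^ (r / 3 + -β + r / 3)) Filter.atTop (nhds 0) := by
      have := tendsto_rpow_neg_atTop hc'
      simpa using this
    have h2 := h1.comp (tendsto_natCast_atTop_atTop (R := ℝ))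
    simpa [Function.comp] using h2.const_mul (2:ℝ)
  have hbt : Filter.Tendsto b Filter.atTop (nhds (ιs (ιss (h ε ω)))) := by
    rw [tendsto_iff_norm_sub_tendsto_zero]
    exact squeeze_zero' (Filter.Eventually.of_forall fun n => norm_nonneg _) hev htend0
  have hsum1 : Summable (fun n : ℕ => 2 * (n:ℝ) ^ (r / 3 + -β + r / 3)) :=
    (Real.summable_nat_rpow.mpr hc).mul_left 2
  have hsum2 : Summable (fun n : ℕ => 2 * ((n + 1 : ℕ):ℝ) ^ (r / 3 + -β + r / 3)) :=
    ((summable_nat_add_iff 1).mpr (Real.summable_nat_rpow.mpr hc)).mul_left 2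
  have hTsum : Summable (fun n : ℕ => ‖T n‖) := by
    obtain ⟨N, hN⟩ := Filter.eventually_atTop.mp hev
    apply Summable.of_norm_bounded_eventually_nat
      (g := fun n : ℕ => 2 * ((n + 1 : ℕ):ℝ) ^ (r / 3 + -β + r / 3) +
        2 * (n:ℝ) ^ (r / 3 + -β + r / 3)) (hsum2.add hsum1)
    filter_upwards [Filter.eventually_ge_atTop N] with n hn
    have h1 := hN (n + 1) (le_trans hn (Nat.le_succ n))
    have h2 := hN n hn
    have hsplit : T n = (b (n + 1) - ιs (ιss (h ε ω))) - (b n - ιs (ιss (h ε ω))) := by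
      rw [hTeq n]; abel
    rw [Real.norm_eq_abs, abs_norm, hsplit]
    exact (norm_sub_le _ _).trans (add_le_add h1 h2)
  have hTsummable : Summable T := hTsum.of_norm
  have hb0 : b 0 = ιs (ιss (h 0 ω)) := by
    rw [hbdef]
    simp [iterOp]
  have hpartial : ∀ N : ℕ, ∑ n ∈ Finset.range N, T n = b N - b 0 := by
    intro N
    calc ∑ n ∈ Finset.range N, T n = ∑ n ∈ Finset.range N, (b (n + 1) - b n) :=
          Finset.sum_congr rfl fun n _ => hTeq n
      _ = b N - b 0 := Finset.sum_range_sub b N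
  have hptend : Filter.Tendsto (fun N => ∑ n ∈ Finset.range N, T n) Filter.atTop
      (nhds (ιs (ιss (h ε ω)) - ιs (ιss (h 0 ω)))) := by
    have h1 : Filter.Tendsto (fun N => b N - b 0) Filter.atTop
        (nhds (ιs (ιss (h ε ω)) - ιs (ιss (h 0 ω)))) := by
      rw [← hb0]
      exact hbt.sub tendsto_const_nhds
    exact Filter.Tendsto.congr (fun N => (hpartial N).symm) h1
  have hts : (∑' n, T n) = ιs (ιss (h ε ω)) - ιs (ιss (h 0 ω)) :=
    tendsto_nhds_unique hTsummable.hasSum.tendsto_sum_nat hptend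
  exact ⟨hTsum, hts ▸ hTsummable.hasSum⟩
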